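/- The expected number of β-redexes in a uniformly random λυ-term of size n is asymptotically 3n/64, i.e., E(X_n)/n → 3/64, where X_n counts subterms of the form (λa)b. -/

import Mathlib

open Finset Filter

mutual
inductive Tm : Type
  | idx : Nat → Tm
  | lam : Tm → Tm
  | app : Tm → Tm → Tm
  | clos : Tm → Subst → Tm
inductive Subst : Type
  | slash : Tm → Subst
  | lift : Subst → Subst
  | shift : Subst
end

mutual
/-- Natural size of a λυ-term: every constructor weighs 1; index n has size n+1. -/
def Tm.size : Tm → Nat
  | .idx n => n + 1
  | .lam a => Tm.size a + 1
  | .app a b => Tm.size a + Tm.size b + 1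
  | .clos a s => Tm.size a + Subst.size s + 1
/-- Natural size of an explicit substitution. -/
def Subst.size : Subst → Nat
  | .slash a => Tm.size a + 1
  | .lift s => Subst.size s + 1
  | .shift => 1
end

/-- Number of λυ-terms of size `n`. -/
noncomputable def tcount (n : ℕ) : ℕ := Nat.card {a : Tm // Tm.size a = n}

/-- Number of explicit substitutions of size `n`. -/
noncomputable def scount (n : ℕ) : ℕ := Nat.card {s : Subst // Subst.size s = n}

/-- Expected value of the statistic `f` on a uniformly random λυ-term of size `n`
(the statistic is assumed to be bounded by the size, so summing `k` up to `n` suffices). -/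
noncomputable def expectTm (f : Tm → ℕ) (n : ℕ) : ℝ :=
  (∑ k ∈ Finset.range (n + 1),
      (k : ℝ) * (Nat.card {a : Tm // Tm.size a = n ∧ f a = k} : ℝ)) / (tcount n : ℝ)

mutual
/-- Number of (beta)-redexes occurring in a λυ-term. -/
def Tm.betaCount : Tm → ℕ
  | .idx _ => 0
  | .lam a => Tm.betaCount a
  | .app (.lam a) b => Tm.betaCount a + Tm.betaCount b + 1
  | .app a b => Tm.betaCount a + Tm.betaCount b
  | .clos a s => Tm.betaCount a + Subst.betaCount s
/-- Number of (beta)-redexes occurring in a substitution. -/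
def Subst.betaCount : Subst → ℕ
  | .slash a => Tm.betaCount a
  | .lift s => Subst.betaCount s
  | .shift => 0
end

theorem Tm.size_pos (a : Tm) : 0 < a.size := by cases a <;> simp [Tm.size]
theorem Subst.size_pos (s : Subst) : 0 < s.size := by cases s <;> simp [Subst.size]

def Tm.isLam : Tm → Bool
  | .lam _ => true
  | _ => false

theorem Tm.bc_app (a b : Tm) :
    (Tm.app a b).betaCount = a.betaCount + b.betaCount + (if a.isLam then 1 else 0) := by
  cases a <;> simp [Tm.betaCount, Tm.isLam]

mutual
theorem Tm.bc_lt : ∀ a : Tm, a.betaCount < a.size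
  | .idx n => by simp [Tm.betaCount, Tm.size]
  | .lam a => by have := Tm.bc_lt a; simp [Tm.betaCount, Tm.size]; omega
  | .app a b => by
    have ha := Tm.bc_lt a; have hb := Tm.bc_lt b
    rw [Tm.bc_app]
    cases a <;> simp [Tm.isLam, Tm.size] <;> simp [Tm.size] at ha <;> omega
  | .clos a s => by
    have := Tm.bc_lt a; have := Subst.bc_lt s
    simp [Tm.betaCount, Tm.size]; omega
theorem Subst.bc_lt : ∀ s : Subst, s.betaCount < s.size
  | .slash a => by have := Tm.bc_lt a; simp [Subst.betaCount, Subst.size]; omega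
  | .lift s => by have := Subst.bc_lt s; simp [Subst.betaCount, Subst.size]; omega
  | .shift => by simp [Subst.betaCount, Subst.size]
end

/-- generic fiber decomposition of pairs with prescribed total weight -/
def fibEquiv {α β : Type*} (f : α → ℕ) (g : β → ℕ) (n : ℕ) :
    {p : α × β // f p.1 + g p.2 = n} ≃
      Σ i : Fin (n + 1), {a : α // f a = i.1} × {b : β // g b = n - i.1} where
  toFun p := ⟨⟨f p.1.1, by have := p.2; omega⟩, ⟨p.1.1, rfl⟩,
    ⟨p.1.2, show g p.1.2 = n - f p.1.1 by have := p.2; omega⟩⟩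
  invFun x := ⟨(x.2.1.1, x.2.2.1), by
    have h1 : x.1.1 ≤ n := Nat.lt_succ_iff.mp x.1.2
    have h2 := x.2.1.2
    have h3 := x.2.2.2
    show f x.2.1.1 + g x.2.2.1 = n
    omega⟩
  left_inv p := rfl
  right_inv x := by
    obtain ⟨⟨i, hi⟩, ⟨a, ha⟩, ⟨b, hb⟩⟩ := x
    simp only at ha
    subst ha
    rfl

def tmEquiv (n : ℕ) : {a : Tm // a.size = n + 1} ≃
    (Unit ⊕ {a : Tm // a.size = n} ⊕ {p : Tm × Tm // p.1.size + p.2.size = n}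
      ⊕ {p : Tm × Subst // p.1.size + p.2.size = n}) where
  toFun := fun ⟨a, h⟩ =>
    match a, h with
    | .idx m, _ => .inl ()
    | .lam a, h => .inr (.inl ⟨a, by simpa [Tm.size] using h⟩)
    | .app a b, h => .inr (.inr (.inl ⟨(a, b), by simpa [Tm.size] using h⟩))
    | .clos a s, h => .inr (.inr (.inr ⟨(a, s), by simpa [Tm.size] using h⟩))
  invFun := fun x =>
    match x with
    | .inl _ => ⟨.idx n, rfl⟩
    | .inr (.inl ⟨a, h⟩) => ⟨.lam a, by simp [Tm.size, h]⟩
    | .inr (.inr (.inl ⟨p, h⟩)) => ⟨.app p.1 p.2, by simp [Tm.size]; omega⟩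
    | .inr (.inr (.inr ⟨p, h⟩)) => ⟨.clos p.1 p.2, by simp [Tm.size]; omega⟩
  left_inv := fun ⟨a, h⟩ => by
    cases a with
    | idx m =>
        have hm : m = n := by simpa [Tm.size] using h
        subst hm; rfl
    | lam a => rfl
    | app a b => rfl
    | clos a s => rfl
  right_inv x := by
    rcases x with _ | (⟨a, h⟩ | (⟨p, h⟩ | ⟨p, h⟩)) <;> rfl

def substEquiv (n : ℕ) : {s : Subst // s.size = n + 1} ≃
    ({a : Tm // a.size = n} ⊕ {s : Subst // s.size = n} ⊕ PLift (n = 0)) where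
  toFun := fun ⟨s, h⟩ =>
    match s, h with
    | .slash a, h => .inl ⟨a, by simpa [Subst.size] using h⟩
    | .lift s, h => .inr (.inl ⟨s, by simpa [Subst.size] using h⟩)
    | .shift, h => .inr (.inr ⟨by simpa [Subst.size] using h.symm⟩)
  invFun := fun x =>
    match x with
    | .inl ⟨a, h⟩ => ⟨.slash a, by simp [Subst.size, h]⟩
    | .inr (.inl ⟨s, h⟩) => ⟨.lift s, by simp [Subst.size, h]⟩
    | .inr (.inr h) => ⟨.shift, by simp [Subst.size, h.down]⟩
  left_inv := fun ⟨s, h⟩ => by cases s <;> rfl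
  right_inv x := by rcases x with ⟨a, h⟩ | (⟨s, h⟩ | ⟨h⟩) <;> rfl

instance : IsEmpty {a : Tm // a.size = 0} :=
  ⟨fun ⟨a, h⟩ => by have := a.size_pos; omega⟩
instance : IsEmpty {s : Subst // s.size = 0} :=
  ⟨fun ⟨s, h⟩ => by have := s.size_pos; omega⟩

theorem finite_all : ∀ n : ℕ,
    Finite {a : Tm // a.size = n} ∧ Finite {s : Subst // s.size = n} := by
  intro n
  induction n using Nat.strong_induction_on with
  | _ n ih =>
    match n with
    | 0 => exact ⟨Finite.of_subsingleton.{1}, Finite.of_subsingleton.{1}⟩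
    | n + 1 =>
      have hT : ∀ k, k < n + 1 → Finite {a : Tm // a.size = k} := fun k hk => (ih k hk).1
      have hS : ∀ k, k < n + 1 → Finite {s : Subst // s.size = k} := fun k hk => (ih k hk).2
      have fT : ∀ i : Fin (n + 1), Finite {a : Tm // a.size = i.1} := fun i => hT i.1 i.2
      have fT' : ∀ i : Fin (n + 1), Finite {b : Tm // b.size = n - i.1} :=
        fun i => hT (n - i.1) (by omega)
      have fS' : ∀ i : Fin (n + 1), Finite {b : Subst // b.size = n - i.1} :=
        fun i => hS (n - i.1) (by omega)
      haveI := hT n (by omega)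
      haveI := hS n (by omega)
      haveI : Finite {p : Tm × Tm // p.1.size + p.2.size = n} := by
        haveI := fT; haveI := fT'
        exact Finite.of_equiv _ (fibEquiv Tm.size Tm.size n).symm
      haveI : Finite {p : Tm × Subst // p.1.size + p.2.size = n} := by
        haveI := fT; haveI := fS'
        exact Finite.of_equiv _ (fibEquiv Tm.size Subst.size n).symm
      exact ⟨Finite.of_equiv _ (tmEquiv n).symm, Finite.of_equiv _ (substEquiv n).symm⟩

instance instFinT (n : ℕ) : Finite {a : Tm // a.size = n} := (finite_all n).1
instance instFinS (n : ℕ) : Finite {s : Subst // s.size = n} := (finite_all n).2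
noncomputable instance (n : ℕ) : Fintype {a : Tm // a.size = n} := Fintype.ofFinite _
noncomputable instance (n : ℕ) : Fintype {s : Subst // s.size = n} := Fintype.ofFinite _


instance (n : ℕ) : Finite {p : Tm × Tm // p.1.size + p.2.size = n} :=
  Finite.of_equiv _ (fibEquiv _ _ n).symm
instance (n : ℕ) : Finite {p : Tm × Subst // p.1.size + p.2.size = n} :=
  Finite.of_equiv _ (fibEquiv _ _ n).symm
noncomputable instance (n : ℕ) : Fintype {p : Tm × Tm // p.1.size + p.2.size = n} :=
  Fintype.ofFinite _
noncomputable instance (n : ℕ) : Fintype {p : Tm × Subst // p.1.size + p.2.size = n} :=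
  Fintype.ofFinite _

lemma nat_card_sigma {ι : Type*} [Fintype ι] (f : ι → Type*) [∀ i, Finite (f i)] :
    Nat.card (Σ i, f i) = ∑ i, Nat.card (f i) := by
  haveI := fun i => Fintype.ofFinite (f i)
  simp [Nat.card_eq_fintype_card]

lemma card_pairs {α β : Type*} (f : α → ℕ) (g : β → ℕ)
    [∀ k, Finite {a : α // f a = k}] [∀ k, Finite {b : β // g b = k}] (n : ℕ) :
    Nat.card {p : α × β // f p.1 + g p.2 = n}
      = ∑ i ∈ range (n + 1), Nat.card {a : α // f a = i} * Nat.card {b : β // g b = n - i} := by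
  rw [Nat.card_congr (fibEquiv f g n), nat_card_sigma, ← Fin.sum_univ_eq_sum_range]
  simp [Nat.card_prod]

lemma tcount_zero : tcount 0 = 0 := by simp [tcount]
lemma scount_zero : scount 0 = 0 := by simp [scount]

lemma tcount_succ (n : ℕ) : tcount (n + 1) =
    1 + tcount n + (∑ i ∈ range (n + 1), tcount i * tcount (n - i))
      + ∑ i ∈ range (n + 1), tcount i * scount (n - i) := by
  rw [tcount, Nat.card_congr (tmEquiv n), Nat.card_sum, Nat.card_sum, Nat.card_sum]
  rw [card_pairs, card_pairs]
  simp [tcount, scount, Nat.add_assoc]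

lemma card_plift (n : ℕ) : Nat.card (PLift (n = 0)) = if n = 0 then 1 else 0 := by
  cases n with
  | zero => simp
  | succ n => simp

lemma scount_succ (n : ℕ) : scount (n + 1) =
    tcount n + scount n + (if n = 0 then 1 else 0) := by
  rw [scount, Nat.card_congr (substEquiv n), Nat.card_sum, Nat.card_sum, card_plift]
  simp [tcount, scount, Nat.add_assoc]

lemma tcount_eq_card (n : ℕ) : tcount n = Fintype.card {a : Tm // a.size = n} :=
  Nat.card_eq_fintype_card
lemma scount_eq_card (n : ℕ) : scount n = Fintype.card {s : Subst // s.size = n} :=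
  Nat.card_eq_fintype_card

lemma sum_size_succ (F : Tm → ℕ) (n : ℕ) :
    ∑ a : {a : Tm // a.size = n + 1}, F a.1
      = F (.idx n) + (∑ a : {a : Tm // a.size = n}, F (.lam a.1))
        + (∑ p : {p : Tm × Tm // p.1.size + p.2.size = n}, F (.app p.1.1 p.1.2))
        + ∑ p : {p : Tm × Subst // p.1.size + p.2.size = n}, F (.clos p.1.1 p.1.2) := by
  rw [← Equiv.sum_comp (tmEquiv n).symm (fun a => F a.1)]
  rw [Fintype.sum_sum_type, Fintype.sum_sum_type, Fintype.sum_sum_type]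
  simp [tmEquiv, Nat.add_assoc]

lemma sum_ssize_succ (F : Subst → ℕ) (n : ℕ) :
    ∑ s : {s : Subst // s.size = n + 1}, F s.1
      = (∑ a : {a : Tm // a.size = n}, F (.slash a.1))
        + (∑ s : {s : Subst // s.size = n}, F (.lift s.1))
        + (if n = 0 then F .shift else 0) := by
  rw [← Equiv.sum_comp (substEquiv n).symm (fun s => F s.1)]
  rw [Fintype.sum_sum_type, Fintype.sum_sum_type]
  have : ∑ x : PLift (n = 0), F ((substEquiv n).symm (.inr (.inr x))).1
      = if n = 0 then F .shift else 0 := by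
    cases n with
    | zero => simp [substEquiv]
    | succ n => simp
  rw [this]
  simp [substEquiv, Nat.add_assoc]

lemma sum_pairs {α β : Type*} (f : α → ℕ) (g : β → ℕ)
    [∀ k, Fintype {a : α // f a = k}] [∀ k, Fintype {b : β // g b = k}]
    (n : ℕ) [Fintype {p : α × β // f p.1 + g p.2 = n}] (G : α → β → ℕ) :
    ∑ p : {p : α × β // f p.1 + g p.2 = n}, G p.1.1 p.1.2
      = ∑ i ∈ range (n + 1), ∑ a : {a : α // f a = i}, ∑ b : {b : β // g b = n - i}, G a.1 b.1 := by
  rw [← Equiv.sum_comp (fibEquiv f g n).symm (fun p => G p.1.1 p.1.2)]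
  rw [← Finset.univ_sigma_univ, Finset.sum_sigma, ← Fin.sum_univ_eq_sum_range]
  apply Finset.sum_congr rfl
  intro i _
  rw [Fintype.sum_prod_type]
  rfl

noncomputable def btot (n : ℕ) : ℕ := ∑ a : {a : Tm // a.size = n}, a.1.betaCount
noncomputable def dtot (n : ℕ) : ℕ := ∑ s : {s : Subst // s.size = n}, s.1.betaCount
noncomputable def Lcount (n : ℕ) : ℕ :=
  ∑ a : {a : Tm // a.size = n}, (if a.1.isLam then 1 else 0)

lemma btot_zero : btot 0 = 0 := by simp [btot]
lemma dtot_zero : dtot 0 = 0 := by simp [dtot]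
lemma Lcount_zero : Lcount 0 = 0 := by simp [Lcount]

lemma Lcount_succ (n : ℕ) : Lcount (n + 1) = tcount n := by
  rw [Lcount, sum_size_succ (fun a => if a.isLam then 1 else 0) n]
  rw [sum_pairs Tm.size Tm.size n (fun a b => if (Tm.app a b).isLam then 1 else 0)]
  rw [sum_pairs Tm.size Subst.size n (fun a s => if (Tm.clos a s).isLam then 1 else 0)]
  simp [Tm.isLam, tcount_eq_card, Finset.card_univ]

lemma dtot_succ (n : ℕ) : dtot (n + 1) = btot n + dtot n := by
  rw [dtot, sum_ssize_succ (fun s => s.betaCount) n]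
  simp [Subst.betaCount, btot, dtot]

lemma btot_succ (n : ℕ) : btot (n + 1) =
    btot n
      + (∑ i ∈ range (n + 1),
          (btot i * tcount (n - i) + tcount i * btot (n - i) + Lcount i * tcount (n - i)))
      + ∑ i ∈ range (n + 1), (btot i * scount (n - i) + tcount i * dtot (n - i)) := by
  rw [btot, sum_size_succ (fun a => a.betaCount) n]
  rw [sum_pairs Tm.size Tm.size n (fun a b => (Tm.app a b).betaCount)]
  rw [sum_pairs Tm.size Subst.size n (fun a s => (Tm.clos a s).betaCount)]
  have h1 : ∀ i ∈ range (n + 1),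
      (∑ a : {a : Tm // a.size = i}, ∑ b : {b : Tm // b.size = n - i},
        (Tm.app a.1 b.1).betaCount)
      = btot i * tcount (n - i) + tcount i * btot (n - i) + Lcount i * tcount (n - i) := by
    intro i _
    simp only [Tm.bc_app, Finset.sum_add_distrib, Finset.sum_const, Finset.card_univ,
      smul_eq_mul, ← Finset.sum_mul, ← Finset.mul_sum]
    rw [btot, btot, Lcount, tcount_eq_card, tcount_eq_card]
    ring
  have h2 : ∀ i ∈ range (n + 1),
      (∑ a : {a : Tm // a.size = i}, ∑ s : {s : Subst // s.size = n - i},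
        (Tm.clos a.1 s.1).betaCount)
      = btot i * scount (n - i) + tcount i * dtot (n - i) := by
    intro i _
    simp only [Tm.betaCount, Finset.sum_add_distrib, Finset.sum_const, Finset.card_univ,
      smul_eq_mul, ← Finset.sum_mul, ← Finset.mul_sum]
    rw [btot, dtot, tcount_eq_card, scount_eq_card]
    ring
  rw [Finset.sum_congr rfl h1, Finset.sum_congr rfl h2]
  simp [Tm.betaCount, btot, Nat.add_assoc]

lemma tcount_one : tcount 1 = 1 := by
  rw [show (1:ℕ) = 0+1 from rfl, tcount_succ]
  simp [tcount_zero, scount_zero]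
lemma tcount_two : tcount 2 = 2 := by
  rw [show (2:ℕ) = 1+1 from rfl, tcount_succ]
  simp [Finset.sum_range_succ, tcount_zero, scount_zero, tcount_one]
lemma scount_one : scount 1 = 1 := by
  rw [show (1:ℕ) = 0+1 from rfl, scount_succ]; simp [tcount_zero, scount_zero]
lemma scount_two : scount 2 = 2 := by
  rw [show (2:ℕ) = 1+1 from rfl, scount_succ]; simp [tcount_one, scount_one]
lemma tcount_three : tcount 3 = 5 := by
  rw [show (3:ℕ) = 2+1 from rfl, tcount_succ]
  simp [Finset.sum_range_succ, tcount_zero, scount_zero, tcount_one, tcount_two,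
    scount_one, scount_two]
lemma Lcount_one : Lcount 1 = 0 := by rw [show (1:ℕ) = 0+1 from rfl, Lcount_succ, tcount_zero]
lemma Lcount_two : Lcount 2 = 1 := by rw [show (2:ℕ) = 1+1 from rfl, Lcount_succ, tcount_one]
lemma Lcount_three : Lcount 3 = 2 := by rw [show (3:ℕ) = 2+1 from rfl, Lcount_succ, tcount_two]
lemma dtot_one : dtot 1 = 0 := by
  rw [show (1:ℕ) = 0+1 from rfl, dtot_succ, btot_zero, dtot_zero]
lemma dtot_two : dtot 2 = dtot 1 + btot 1 := by
  rw [show (2:ℕ) = 1+1 from rfl, dtot_succ]; omega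
lemma btot_one : btot 1 = 0 := by
  rw [show (1:ℕ) = 0+1 from rfl, btot_succ]
  simp [btot_zero, tcount_zero, scount_zero, Lcount_zero, dtot_zero]
lemma btot_two : btot 2 = 0 := by
  rw [show (2:ℕ) = 1+1 from rfl, btot_succ]
  simp [Finset.sum_range_succ, btot_zero, btot_one, tcount_zero, scount_zero,
    Lcount_zero, Lcount_one, dtot_zero, dtot_one]
lemma dtot_two' : dtot 2 = 0 := by rw [dtot_two, dtot_one, btot_one]
lemma btot_three : btot 3 = 0 := by
  rw [show (3:ℕ) = 2+1 from rfl, btot_succ]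
  simp [Finset.sum_range_succ, btot_zero, btot_one, btot_two, tcount_zero, tcount_one,
    scount_zero, scount_one, Lcount_zero, Lcount_one, Lcount_two, dtot_zero, dtot_one, dtot_two']
lemma dtot_three : dtot 3 = 0 := by
  rw [show (3:ℕ) = 2+1 from rfl, dtot_succ, btot_two, dtot_two']
lemma btot_four : btot 4 = 1 := by
  rw [show (4:ℕ) = 3+1 from rfl, btot_succ]
  simp [Finset.sum_range_succ, btot_zero, btot_one, btot_two, btot_three,
    tcount_zero, tcount_one, tcount_two, tcount_three,
    scount_zero, scount_one, scount_two,
    Lcount_zero, Lcount_one, Lcount_two, Lcount_three,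
    dtot_zero, dtot_one, dtot_two', dtot_three]

open PowerSeries in
noncomputable def TT : ℤ⟦X⟧ := PowerSeries.mk fun n => (tcount n : ℤ)
open PowerSeries in
noncomputable def SS : ℤ⟦X⟧ := PowerSeries.mk fun n => (scount n : ℤ)
open PowerSeries in
noncomputable def BB : ℤ⟦X⟧ := PowerSeries.mk fun n => (btot n : ℤ)
open PowerSeries in
noncomputable def DD : ℤ⟦X⟧ := PowerSeries.mk fun n => (dtot n : ℤ)
open PowerSeries in
noncomputable def LL : ℤ⟦X⟧ := PowerSeries.mk fun n => (Lcount n : ℤ)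
open PowerSeries in
noncomputable def II : ℤ⟦X⟧ := PowerSeries.mk fun n => if n = 0 then 0 else 1

namespace PSpart
open PowerSeries

lemma conv (f g : ℕ → ℤ) (n : ℕ) :
    (coeff (R := ℤ) n) ((PowerSeries.mk f) * (PowerSeries.mk g))
      = ∑ i ∈ range (n+1), f i * g (n - i) := by
  rw [coeff_mul, Finset.Nat.sum_antidiagonal_eq_sum_range_succ_mk]
  simp

lemma eqS : SS = X * TT + X * SS + X := by
  ext n
  cases n with
  | zero => simp [SS, scount_zero]
  | succ n =>
      simp only [map_add, coeff_succ_X_mul, coeff_X, SS, TT, coeff_mk, scount_succ]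
      push_cast
      by_cases h : n = 0 <;> simp [h]

lemma eqL : LL = X * TT := by
  ext n
  cases n with
  | zero => simp [LL, Lcount_zero]
  | succ n => simp [LL, TT, coeff_succ_X_mul, Lcount_succ]

lemma eqD : DD = X * BB + X * DD := by
  ext n
  cases n with
  | zero => simp [DD, dtot_zero]
  | succ n =>
      simp only [map_add, coeff_succ_X_mul, DD, BB, coeff_mk, dtot_succ]
      push_cast
      ring

lemma eqII : (1 - X) * II = X := by
  ext n
  rw [sub_mul, one_mul, map_sub]
  cases n with
  | zero => simp [II]
  | succ n =>
      simp only [coeff_succ_X_mul, II, coeff_mk, coeff_X]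
      cases n <;> simp

lemma eqT : TT = II + X * TT + X * (TT * TT) + X * (TT * SS) := by
  ext n
  cases n with
  | zero => simp [TT, II, tcount_zero]
  | succ n =>
      simp only [map_add, coeff_succ_X_mul, TT, SS, II, coeff_mk, tcount_succ, conv]
      push_cast
      norm_num

lemma eqB : BB = X * BB + X * (BB * TT) + X * (TT * BB) + X * (LL * TT)
    + X * (BB * SS) + X * (TT * DD) := by
  ext n
  cases n with
  | zero => simp [BB, btot_zero]
  | succ n =>
      simp only [map_add, coeff_succ_X_mul, BB, TT, SS, DD, LL, coeff_mk, btot_succ, conv]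
      push_cast
      simp only [Finset.sum_add_distrib]
      ring

lemma hT2 : TT = X + 2 * (X * TT) + X * (TT * TT) := by
  linear_combination (1 - X) * eqT + (X * TT) * eqS + eqII

lemma hVsq : (1 - 2*X - 2*(X*TT)) * (1 - 2*X - 2*(X*TT)) = 1 - 4*X := by
  linear_combination (-4*X) * hT2

lemma hBV : BB * (1 - 2*X - 2*(X*TT)) = (1 - X) * (X*TT) * (X*TT) := by
  linear_combination (1-X) * eqB + (X*BB) * eqS + (X*TT) * eqD + ((1-X)*X*TT) * eqL

lemma hB4 : BB * (1 - 4*X) = (1-X) * (X*TT) * (X*TT) * (1 - 2*X - 2*(X*TT)) := by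
  linear_combination (-BB) * hVsq + (1 - 2*X - 2*(X*TT)) * hBV

lemma mainX : 2 * BB = X * (8 * BB) - X * (2 * TT) + X^2 * (10 * TT)
    - X^3 * (12 * TT) + X^4 * (4 * TT) + (2*X^2 - 6*X^3 + 4*X^4) := by
  linear_combination 2 * hB4 + (-(1-X)*(1-2*X)) * hVsq + (4*X^2*(1-X)*TT - 2*X*(1-X)*(1-2*X)) * hT2

end PSpart

namespace PSpart
open PowerSeries

lemma brec (m : ℕ) : 2 * (btot (m+5) : ℤ) =
    8 * (btot (m+4) : ℤ) - 2 * (tcount (m+4) : ℤ) + 10 * (tcount (m+3) : ℤ)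
      - 12 * (tcount (m+2) : ℤ) + 4 * (tcount (m+1) : ℤ) := by
  have c2 : (2:ℤ⟦X⟧) = C (R := ℤ) 2 := (map_ofNat _ 2).symm
  have c4 : (4:ℤ⟦X⟧) = C (R := ℤ) 4 := (map_ofNat _ 4).symm
  have c6 : (6:ℤ⟦X⟧) = C (R := ℤ) 6 := (map_ofNat _ 6).symm
  have c8 : (8:ℤ⟦X⟧) = C (R := ℤ) 8 := (map_ofNat _ 8).symm
  have c10 : (10:ℤ⟦X⟧) = C (R := ℤ) 10 := (map_ofNat _ 10).symm
  have c12 : (12:ℤ⟦X⟧) = C (R := ℤ) 12 := (map_ofNat _ 12).symm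
  have hm : 2 * BB = X * (C (R := ℤ) 8 * BB) - X * (C (R := ℤ) 2 * TT) + X^2 * (C (R := ℤ) 10 * TT)
      - X^3 * (C (R := ℤ) 12 * TT) + X^4 * (C (R := ℤ) 4 * TT)
      + (C (R := ℤ) 2 * X^2 - C (R := ℤ) 6 * X^3 + C (R := ℤ) 4 * X^4) := by
    rw [← c2, ← c4, ← c6, ← c8, ← c10, ← c12]
    linear_combination mainX
  have h := congrArg (coeff (R := ℤ) (m+5)) hm
  simp only [map_add, map_sub] at h
  have i1 : m+5 = (m+4)+1 := by omega
  have i2 : m+5 = (m+3)+2 := by omega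
  have i3 : m+5 = (m+2)+3 := by omega
  have i4 : m+5 = (m+1)+4 := by omega
  have e0 : (coeff (R := ℤ) (m+5)) (2 * BB) = 2 * (btot (m+5) : ℤ) := by
    rw [c2, coeff_C_mul]; simp [BB]
  have e1 : (coeff (R := ℤ) (m+5)) (X * (C (R := ℤ) 8 * BB)) = 8 * (btot (m+4) : ℤ) := by
    rw [i1, coeff_succ_X_mul, coeff_C_mul]; simp [BB]
  have e2 : (coeff (R := ℤ) (m+5)) (X * (C (R := ℤ) 2 * TT)) = 2 * (tcount (m+4) : ℤ) := by
    rw [i1, coeff_succ_X_mul, coeff_C_mul]; simp [TT]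
  have e3 : (coeff (R := ℤ) (m+5)) (X^2 * (C (R := ℤ) 10 * TT)) = 10 * (tcount (m+3) : ℤ) := by
    rw [i2, coeff_X_pow_mul, coeff_C_mul]; simp [TT]
  have e4 : (coeff (R := ℤ) (m+5)) (X^3 * (C (R := ℤ) 12 * TT)) = 12 * (tcount (m+2) : ℤ) := by
    rw [i3, coeff_X_pow_mul, coeff_C_mul]; simp [TT]
  have e5 : (coeff (R := ℤ) (m+5)) (X^4 * (C (R := ℤ) 4 * TT)) = 4 * (tcount (m+1) : ℤ) := by
    rw [i4, coeff_X_pow_mul, coeff_C_mul]; simp [TT]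
  have e6 : (coeff (R := ℤ) (m+5)) (C (R := ℤ) 2 * X^2) = 0 := by
    rw [coeff_C_mul, coeff_X_pow]; simp
  have e7 : (coeff (R := ℤ) (m+5)) (C (R := ℤ) 6 * X^3) = 0 := by
    rw [coeff_C_mul, coeff_X_pow]; simp
  have e8 : (coeff (R := ℤ) (m+5)) (C (R := ℤ) 4 * X^4) = 0 := by
    rw [coeff_C_mul, coeff_X_pow]; simp
  rw [e0, e1, e2, e3, e4, e5, e6, e7, e8] at h
  linarith [h]

end PSpart

def sumcat (n : ℕ) : ℕ := ∑ k ∈ range n, catalan k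

lemma sumcat_succ (n : ℕ) : sumcat (n+1) = sumcat n + catalan n :=
  Finset.sum_range_succ _ _

lemma catalan_conv (n : ℕ) :
    ∑ i ∈ range (n+1), catalan i * catalan (n-i) = catalan (n+1) := by
  rw [catalan_succ, ← Fin.sum_univ_eq_sum_range]

lemma cat_tele : ∀ k : ℕ, 1 ≤ k →
    (∑ i ∈ range (k+1), (if i = 0 then 0 else catalan i) * sumcat (k-i)) + 1 = catalan k := by
  intro k hk
  induction k with
  | zero => omega
  | succ k ih =>
    rcases Nat.eq_zero_or_pos k with h1 | h1
    · subst h1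
      simp [Finset.sum_range_succ, sumcat, catalan_one]
    · have step : ∑ i ∈ range (k+1+1), (if i = 0 then 0 else catalan i) * sumcat (k+1-i)
          = (∑ i ∈ range (k+1), (if i = 0 then 0 else catalan i) * sumcat (k-i))
            + ∑ i ∈ range (k+1), (if i = 0 then 0 else catalan i) * catalan (k-i) := by
        rw [Finset.sum_range_succ]
        have hz : k + 1 - (k+1) = 0 := by omega
        rw [hz]
        have sz : sumcat 0 = 0 := rfl
        rw [sz]
        simp only [mul_zero, add_zero]
        rw [← Finset.sum_add_distrib]
        apply Finset.sum_congr rfl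
        intro i hi
        have hi' : i ≤ k := by simpa [Nat.lt_succ_iff] using hi
        have hki : k + 1 - i = (k - i) + 1 := by omega
        rw [hki, sumcat_succ]
        ring
      have conv0 : ∑ i ∈ range (k+1), (if i = 0 then 0 else catalan i) * catalan (k-i)
            + catalan k = catalan (k+1) := by
        rw [← catalan_conv k]
        rw [Finset.sum_range_succ']
        conv_rhs => rw [Finset.sum_range_succ']
        simp
      have := ih h1
      omega

lemma ts_cat : ∀ n : ℕ, (1 ≤ n → tcount n = catalan n) ∧ scount n = sumcat n := by
  intro n
  induction n using Nat.strong_induction_on with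
  | _ n ih =>
    match n with
    | 0 => exact ⟨by omega, by simp [scount_zero, sumcat]⟩
    | n + 1 =>
      have hs : scount (n+1) = sumcat (n+1) := by
        rw [scount_succ, sumcat_succ]
        cases n with
        | zero => simp [tcount_zero, scount_zero, sumcat]
        | succ k =>
          rw [(ih (k+1) (by omega)).1 (by omega), (ih (k+1) (by omega)).2]
          simp only [Nat.succ_ne_zero, if_false]
          omega
      refine ⟨fun _ => ?_, hs⟩
      cases n with
      | zero => rw [tcount_one, catalan_one]
      | succ j =>
        rw [tcount_succ]
        have l1 : ∑ i ∈ range (j+1+1), tcount i * tcount (j+1-i)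
            = ∑ i ∈ range j, catalan (i+1) * catalan (j-i) := by
          rw [Finset.sum_range_succ']
          rw [Finset.sum_range_succ]
          rw [tcount_zero]
          have hz : j + 1 - (j+1) = 0 := by omega
          rw [hz, tcount_zero]
          simp only [mul_zero, zero_mul, add_zero]
          apply Finset.sum_congr rfl
          intro i hi
          have hi' : i < j := by simpa using hi
          have hidx : j + 1 - (i+1) = j - i := by omega
          rw [hidx, (ih (i+1) (by omega)).1 (by omega),
            (ih (j-i) (by omega)).1 (by omega)]
        have r1 : catalan (j+1+1) = (∑ i ∈ range j, catalan (i+1) * catalan (j-i))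
            + 2 * catalan (j+1) := by
          rw [← catalan_conv (j+1)]
          rw [Finset.sum_range_succ']
          rw [Finset.sum_range_succ]
          have hz : j + 1 - (j+1) = 0 := by omega
          rw [hz]
          have : ∀ i ∈ range j, catalan (i+1) * catalan (j+1-(i+1))
              = catalan (i+1) * catalan (j-i) := by
            intro i hi
            have hidx : j + 1 - (i+1) = j - i := by omega
            rw [hidx]
          rw [Finset.sum_congr rfl this]
          simp [catalan_zero]
          omega
        have hB : (∑ i ∈ range (j+1+1), tcount i * scount (j+1-i)) + 1 = catalan (j+1) := by
          have ht := cat_tele (j+1) (by omega)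
          rw [← ht]
          congr 1
          apply Finset.sum_congr rfl
          intro i hi
          have hi' : i ≤ j+1 := by simpa [Nat.lt_succ_iff] using hi
          rcases Nat.eq_zero_or_pos i with h0 | h0
          · simp [h0, tcount_zero]
          · rw [(ih i (by omega)).1 (by omega), (ih (j+1-i) (by omega)).2]
            have : ¬ (i = 0) := by omega
            simp [this]
        rw [(ih (j+1) (by omega)).1 (by omega), l1]
        omega

lemma tcat (n : ℕ) (h : 1 ≤ n) : tcount n = catalan n := (ts_cat n).1 h

lemma catZ (k : ℕ) : ((k:ℤ)+2) * (catalan (k+1) : ℤ) = (4*k+2) * (catalan k : ℤ) := by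
  have h1 : (k+1+1) * catalan (k+1) = Nat.centralBinom (k+1) :=
    succ_mul_catalan_eq_centralBinom (k+1)
  have h2 : (k+1) * Nat.centralBinom (k+1) = 2 * (2*k+1) * Nat.centralBinom k :=
    Nat.succ_mul_centralBinom_succ k
  have h3 : (k+1) * catalan k = Nat.centralBinom k := succ_mul_catalan_eq_centralBinom k
  have key : (k+1) * ((k+2) * catalan (k+1)) = (k+1) * ((4*k+2) * catalan k) := by
    calc (k+1) * ((k+2) * catalan (k+1)) = (k+1) * ((k+1+1) * catalan (k+1)) := by ring_nf
      _ = (k+1) * Nat.centralBinom (k+1) := by rw [h1]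
      _ = 2 * (2*k+1) * Nat.centralBinom k := h2
      _ = 2 * (2*k+1) * ((k+1) * catalan k) := by rw [h3]
      _ = (k+1) * ((4*k+2) * catalan k) := by ring
  have := Nat.eq_of_mul_eq_mul_left (by omega : 0 < k+1) key
  exact_mod_cast this

lemma catalan_four : catalan 4 = 14 := by
  rw [show (4:ℕ) = 3+1 from rfl, ← catalan_conv]
  simp [Finset.sum_range_succ, catalan_zero, catalan_one, catalan_two, catalan_three]

lemma bform : ∀ n : ℕ, 2 * (btot (n+3) : ℤ) =
    ((n:ℤ)+4) * (catalan (n+3) : ℤ) - 5*((n:ℤ)+3) * (catalan (n+2) : ℤ)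
      + 6*((n:ℤ)+2) * (catalan (n+1) : ℤ) - 2*((n:ℤ)+1) * (catalan n : ℤ) := by
  intro n
  induction n using Nat.strong_induction_on with
  | _ n ih =>
    match n with
    | 0 =>
      rw [show (0:ℕ)+3 = 3 from rfl, show (0:ℕ)+2 = 2 from rfl, show (0:ℕ)+1 = 1 from rfl,
        btot_three, catalan_three, catalan_two, catalan_one, catalan_zero]
      norm_num
    | 1 =>
      rw [show (1:ℕ)+3 = 4 from rfl, show (1:ℕ)+2 = 3 from rfl, show (1:ℕ)+1 = 2 from rfl,
        btot_four, catalan_four, catalan_three, catalan_two, catalan_one]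
      norm_num
    | (m+2) =>
      have IH := ih (m+1) (by omega)
      have hrec := PSpart.brec m
      rw [tcat (m+4) (by omega), tcat (m+3) (by omega), tcat (m+2) (by omega),
        tcat (m+1) (by omega)] at hrec
      have k1 := catZ (m+4)
      have k2 := catZ (m+3)
      have k3 := catZ (m+2)
      have k4 := catZ (m+1)
      simp only [show m+1+3 = m+4 from by omega, show m+1+2 = m+3 from by omega,
        show m+1+1 = m+2 from by omega] at IH
      simp only [show m+4+1 = m+5 from by omega] at k1
      simp only [show m+3+1 = m+4 from by omega] at k2
      simp only [show m+2+1 = m+3 from by omega] at k3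
      simp only [show m+1+1 = m+2 from by omega] at k4
      simp only [show m+2+3 = m+5 from by omega, show m+2+2 = m+4 from by omega,
        show m+2+1 = m+3 from by omega]
      push_cast at IH hrec k1 k2 k3 k4 ⊢
      linear_combination 4 * IH + hrec - k1 + 5 * k2 - 6 * k3 + 2 * k4

lemma catalan_pos' (n : ℕ) : 0 < catalan n := by
  have h := succ_mul_catalan_eq_centralBinom n
  have hc := Nat.centralBinom_pos n
  rcases Nat.eq_zero_or_pos (catalan n) with h0 | h0
  · rw [h0, mul_zero] at h; omega
  · exact h0

lemma numerator_nat (n : ℕ) :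
    ∑ k ∈ range (n+1), k * Nat.card {a : Tm // Tm.size a = n ∧ Tm.betaCount a = k}
      = btot n := by
  classical
  have hcard : ∀ k, (Nat.card {a : Tm // Tm.size a = n ∧ Tm.betaCount a = k})
      = (Finset.univ.filter (fun x : {a : Tm // a.size = n} => x.1.betaCount = k)).card := by
    intro k
    rw [← Nat.card_congr (Equiv.subtypeSubtypeEquivSubtypeInter
      (fun a : Tm => a.size = n) (fun a => a.betaCount = k))]
    rw [Nat.card_eq_fintype_card, Fintype.card_subtype]
  have step1 : ∀ k ∈ range (n+1),
      k * Nat.card {a : Tm // Tm.size a = n ∧ Tm.betaCount a = k}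
        = ∑ x ∈ Finset.univ.filter
            (fun x : {a : Tm // a.size = n} => x.1.betaCount = k), x.1.betaCount := by
    intro k _
    rw [hcard k]
    rw [Finset.sum_congr rfl (fun x hx => (Finset.mem_filter.mp hx).2)]
    rw [Finset.sum_const, smul_eq_mul, mul_comm]
  rw [Finset.sum_congr rfl step1]
  rw [Finset.sum_fiberwise_of_maps_to (fun x _ => Finset.mem_range.mpr (by
    have hlt := Tm.bc_lt x.1
    have hsz := x.2
    omega))]
  rfl

lemma expect_eq (n : ℕ) :
    expectTm Tm.betaCount n = (btot n : ℝ) / (tcount n : ℝ) := by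
  rw [expectTm]
  congr 1
  rw [← numerator_nat n]
  push_cast
  rfl

lemma expect_ratio (m : ℕ) :
    expectTm Tm.betaCount (m+3) / (((m+3 : ℕ)) : ℝ)
      = (6*((m:ℝ)+3)^4 - 40*((m:ℝ)+3)^3 + 78*((m:ℝ)+3)^2 + 4*((m:ℝ)+3) - 120)
        / (128*((m:ℝ)+3)^4 - 576*((m:ℝ)+3)^3 + 736*((m:ℝ)+3)^2 - 240*((m:ℝ)+3)) := by
  have t3 : tcount (m+3) = catalan (m+3) := tcat _ (by omega)
  rw [expect_eq, t3]
  have q1' := catZ (m+2)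
  have q2' := catZ (m+1)
  have q3' := catZ m
  simp only [show m+2+1 = m+3 from by omega] at q1'
  simp only [show m+1+1 = m+2 from by omega] at q2'
  have hbf' := bform m
  set c0 : ℝ := (catalan (m+3) : ℝ) with hc0def
  set c1 : ℝ := (catalan (m+2) : ℝ) with hc1def
  set c2 : ℝ := (catalan (m+1) : ℝ) with hc2def
  set c3 : ℝ := (catalan m : ℝ) with hc3def
  set bt : ℝ := (btot (m+3) : ℝ) with hbtdef
  have q1 : ((m:ℝ)+4) * c0 = (4*(m:ℝ)+10) * c1 := by
    rw [hc0def, hc1def]; exact_mod_cast q1'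
  have q2 : ((m:ℝ)+3) * c1 = (4*(m:ℝ)+6) * c2 := by
    rw [hc1def, hc2def]; exact_mod_cast q2'
  have q3 : ((m:ℝ)+2) * c2 = (4*(m:ℝ)+2) * c3 := by
    rw [hc2def, hc3def]; exact_mod_cast q3'
  have hbf : 2 * bt = ((m:ℝ)+4) * c0 - 5*((m:ℝ)+3) * c1 + 6*((m:ℝ)+2) * c2
      - 2*((m:ℝ)+1) * c3 := by
    rw [hbtdef, hc0def, hc1def, hc2def, hc3def]; exact_mod_cast hbf'
  have d2 : (4*(m:ℝ)+10)*(4*(m:ℝ)+6)*c2 = ((m:ℝ)+4)*((m:ℝ)+3)*c0 := by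
    linear_combination (-(4*(m:ℝ)+10))*q2 - ((m:ℝ)+3)*q1
  have d3 : (4*(m:ℝ)+10)*(4*(m:ℝ)+6)*(4*(m:ℝ)+2)*c3 = ((m:ℝ)+4)*((m:ℝ)+3)*((m:ℝ)+2)*c0 := by
    linear_combination (-(4*(m:ℝ)+10)*(4*(m:ℝ)+6))*q3 + ((m:ℝ)+2)*d2
  have dd : 2*bt*((4*(m:ℝ)+10)*(4*(m:ℝ)+6)*(4*(m:ℝ)+2))
      = c0 * (((m:ℝ)+4)*((4*(m:ℝ)+10)*(4*(m:ℝ)+6)*(4*(m:ℝ)+2))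
          - 5*((m:ℝ)+3)*((m:ℝ)+4)*((4*(m:ℝ)+6)*(4*(m:ℝ)+2))
          + 6*((m:ℝ)+2)*((m:ℝ)+4)*((m:ℝ)+3)*(4*(m:ℝ)+2)
          - 2*((m:ℝ)+1)*((m:ℝ)+4)*((m:ℝ)+3)*((m:ℝ)+2)) := by
    linear_combination ((4*(m:ℝ)+10)*(4*(m:ℝ)+6)*(4*(m:ℝ)+2))*hbf
      - 5*((m:ℝ)+3)*((4*(m:ℝ)+6)*(4*(m:ℝ)+2))*q1 + (160*(m:ℝ)^3+800*(m:ℝ)^2+1080*(m:ℝ)+360)*q1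
      + 6*((m:ℝ)+2)*(4*(m:ℝ)+2)*d2 - 2*((m:ℝ)+1)*d3
  have hc0pos : (0:ℝ) < c0 := by
    rw [hc0def]; exact_mod_cast catalan_pos' (m+3)
  have hmp : (0:ℝ) < (m:ℝ)+3 := by positivity
  have hden : (128*((m:ℝ)+3)^4 - 576*((m:ℝ)+3)^3 + 736*((m:ℝ)+3)^2 - 240*((m:ℝ)+3))
      = 2*((m:ℝ)+3)*((4*(m:ℝ)+10)*(4*(m:ℝ)+6)*(4*(m:ℝ)+2)) := by ring
  have hdnz : (128*((m:ℝ)+3)^4 - 576*((m:ℝ)+3)^3 + 736*((m:ℝ)+3)^2 - 240*((m:ℝ)+3)) ≠ 0 := by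
    rw [hden]; positivity
  have hcast : (((m+3 : ℕ)) : ℝ) = (m:ℝ)+3 := by push_cast; ring
  rw [hcast, div_div]
  rw [div_eq_div_iff (by positivity) hdnz]
  linear_combination ((m:ℝ)+3) * dd
lemma expect_ratio_check : True := trivial

noncomputable def Pnum : Polynomial ℝ :=
  Polynomial.C 6 * Polynomial.X^4 + Polynomial.C (-40) * Polynomial.X^3
    + Polynomial.C 78 * Polynomial.X^2 + Polynomial.C 4 * Polynomial.X + Polynomial.C (-120)
noncomputable def Pden : Polynomial ℝ :=
  Polynomial.C 128 * Polynomial.X^4 + Polynomial.C (-576) * Polynomial.X^3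
    + Polynomial.C 736 * Polynomial.X^2 + Polynomial.C (-240) * Polynomial.X

lemma Pnum_deg : Pnum.degree = 4 := by unfold Pnum; compute_degree!
lemma Pden_deg : Pden.degree = 4 := by unfold Pden; compute_degree!
lemma Pnum_natDeg : Pnum.natDegree = 4 := by unfold Pnum; compute_degree!
lemma Pden_natDeg : Pden.natDegree = 4 := by unfold Pden; compute_degree!

lemma Pnum_lead : Pnum.leadingCoeff = 6 := by
  rw [Polynomial.leadingCoeff, Pnum_natDeg]
  unfold Pnum
  simp [Polynomial.coeff_C, Polynomial.coeff_X, Polynomial.coeff_C_mul, Polynomial.coeff_X_pow]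
lemma Pden_lead : Pden.leadingCoeff = 128 := by
  rw [Polynomial.leadingCoeff, Pden_natDeg]
  unfold Pden
  simp [Polynomial.coeff_C, Polynomial.coeff_X, Polynomial.coeff_C_mul, Polynomial.coeff_X_pow]

lemma eval_Pnum (x : ℝ) : Pnum.eval x = 6*x^4 - 40*x^3 + 78*x^2 + 4*x - 120 := by
  simp [Pnum]; ring
lemma eval_Pden (x : ℝ) : Pden.eval x = 128*x^4 - 576*x^3 + 736*x^2 - 240*x := by
  simp [Pden]; ring

theorem stmt14' :
    Tendsto (fun n : ℕ => expectTm Tm.betaCount n / (n : ℝ)) atTop (nhds (3 / 64)) := by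
  have hlim : Tendsto (fun x : ℝ => Pnum.eval x / Pden.eval x) atTop (nhds (3/64)) := by
    have h := Polynomial.div_tendsto_leadingCoeff_div_of_degree_eq Pnum Pden
      (by rw [Pnum_deg, Pden_deg])
    rw [Pnum_lead, Pden_lead] at h
    norm_num at h
    exact h
  have hcomp : Tendsto (fun n : ℕ => Pnum.eval (n:ℝ) / Pden.eval (n:ℝ)) atTop (nhds (3/64)) :=
    hlim.comp tendsto_natCast_atTop_atTop
  apply hcomp.congr'
  rw [Filter.eventuallyEq_iff_exists_mem]
  refine ⟨{n | 3 ≤ n}, Filter.mem_atTop 3, ?_⟩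
  intro n hn
  have hn' : 3 ≤ n := hn
  obtain ⟨m, rfl⟩ : ∃ m, n = m + 3 := ⟨n - 3, by omega⟩
  show Pnum.eval _ / Pden.eval _ = expectTm Tm.betaCount (m+3) / (((m+3:ℕ)) : ℝ)
  rw [eval_Pnum, eval_Pden, expect_ratio m]
  push_cast
  norm_num

/-- the expected number of β-redexes in a random λυ-term of size n,
divided by n, tends to 3/64. -/
theorem stmt14 :
    Tendsto (fun n : ℕ => expectTm Tm.betaCount n / (n : ℝ)) atTop (nhds (3 / 64)) := stmt14'
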